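/- Let R be a partially ordered commutative ring, N a nonnegative integer, and alpha_1,...,alpha_N, beta_1,...,beta_N, C nonnegative elements of R. Define the sequence (a_n)_{n>=0} by the generating-function identity sum_n a_n t^n = C * prod_{i=1}^N (1 + alpha_i t)/(1 - beta_i t) in R[[t]]. Then the infinite Toeplitz matrix T(a)_{ij} = a_{i-j} (with a_m = 0 for m < 0) is totally positive. -/

import Mathlib

/-- A minor of an infinite matrix: the determinant of the square submatrix with
rows `r 0 < r 1 < ⋯` and columns `c 0 < c 1 < ⋯`. -/
noncomputable def minor {R : Type*} [CommRing R] (A : ℕ → ℕ → R) {k : ℕ}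
    (r c : Fin k → ℕ) : R :=
  (Matrix.of fun i j => A (r i) (c j)).det

/-- The infinite Toeplitz matrix of a sequence `a`:
`T(a)_{ij} = a_{i-j}`, with `a_m = 0` for `m < 0`. -/
def toeplitz {R : Type*} (a : ℕ → R) [Zero R] : ℕ → ℕ → R := fun i j =>
  if j ≤ i then a (i - j) else 0

section Aux

variable {R : Type*} [CommRing R]

/-- Multiplication of a sequence by `(1 + α t)` at the level of coefficients. -/
def opA (α : R) (a : ℕ → R) : ℕ → R
  | 0 => a 0
  | n+1 => a (n+1) + α * a n

/-- Multiplication of a sequence by `1/(1 - β t)` at the level of coefficients. -/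
def opB (β : R) (a : ℕ → R) : ℕ → R
  | 0 => a 0
  | n+1 => a (n+1) + β * opB β a n

lemma toeplitz_opA (α : R) (a : ℕ → R) (i m : ℕ) :
    toeplitz (opA α a) i m = toeplitz a i m + α * toeplitz a i (m+1) := by
  unfold toeplitz
  rcases lt_or_ge i m with h | h
  · rw [if_neg (by omega), if_neg (by omega), if_neg (by omega)]; ring
  · rcases eq_or_lt_of_le h with h2 | h2
    · subst h2
      rw [if_pos h, if_pos h, if_neg (by omega)]
      simp [opA]
    · have e : i - m = (i - (m+1)) + 1 := by omega
      rw [if_pos h, if_pos h, if_pos (by omega), e]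
      simp [opA]

lemma toeplitz_opB_succ (β : R) (a : ℕ → R) (s m : ℕ) :
    toeplitz (opB β a) (s+1) m = toeplitz a (s+1) m + β * toeplitz (opB β a) s m := by
  unfold toeplitz
  rcases lt_or_ge (s+1) m with h | h
  · rw [if_neg (by omega), if_neg (by omega), if_neg (by omega)]; ring
  · rcases eq_or_lt_of_le h with h2 | h2
    · subst h2
      rw [if_pos le_rfl, if_pos le_rfl, if_neg (by omega)]
      simp [opB]
    · have e : s + 1 - m = (s - m) + 1 := by omega
      rw [if_pos (by omega), if_pos (by omega), if_pos (by omega), e]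
      simp [opB]

lemma toeplitz_opB_zero (β : R) (a : ℕ → R) (m : ℕ) :
    toeplitz (opB β a) 0 m = toeplitz a 0 m := by
  unfold toeplitz
  rcases Nat.eq_zero_or_pos m with h | h
  · subst h; simp [opB]
  · rw [if_neg (by omega), if_neg (by omega)]

open PowerSeries in
lemma mk_opA (α : R) (a : ℕ → R) :
    PowerSeries.mk (opA α a) = (1 + PowerSeries.C α * PowerSeries.X) * PowerSeries.mk a := by
  ext n
  rw [add_mul, one_mul, mul_assoc, map_add, coeff_mk, PowerSeries.coeff_C_mul]
  cases n with
  | zero => simp [opA]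
  | succ n => rw [PowerSeries.coeff_succ_X_mul, coeff_mk]; simp [opA]

open PowerSeries in
lemma mk_opB (β : R) (a : ℕ → R) :
    (1 - PowerSeries.C β * PowerSeries.X) * PowerSeries.mk (opB β a)
      = PowerSeries.mk a := by
  ext n
  rw [sub_mul, one_mul, mul_assoc, map_sub, coeff_mk, PowerSeries.coeff_C_mul]
  cases n with
  | zero => simp [opB]
  | succ n => rw [PowerSeries.coeff_succ_X_mul, coeff_mk, coeff_mk]; simp [opB]

open PowerSeries in
lemma isUnit_one_sub (β : R) : IsUnit (1 - PowerSeries.C β * PowerSeries.X) := by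
  apply IsUnit.of_mul_eq_one (PowerSeries.mk fun n => β ^ n)
  ext n
  rw [sub_mul, one_mul, mul_assoc, map_sub, coeff_mk, PowerSeries.coeff_C_mul]
  cases n with
  | zero => simp
  | succ n => rw [PowerSeries.coeff_succ_X_mul, coeff_mk]; simp [pow_succ]; ring

end Aux

section TP

variable {R : Type*} [CommRing R] [PartialOrder R] [IsOrderedRing R]

lemma perm_eq_one_of_strictMono {k : ℕ} {σ : Equiv.Perm (Fin k)}
    (h : StrictMono (σ : Fin k → Fin k)) : σ = 1 := by
  have hrange : Set.range (σ : Fin k → Fin k) = Set.range (id : Fin k → Fin k) := by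
    rw [σ.surjective.range_eq, Set.range_id]
  have inst : WellFoundedLT (Fin k) := inferInstance
  have h2 : (σ : Fin k → Fin k) = id :=
    (@StrictMono.range_inj (Fin k) (Fin k) _ _ inst _ _ h strictMono_id).1 hrange
  exact Equiv.ext fun x => congrFun h2 x

lemma det_nonneg_of_forced_id {k : ℕ}
    (A : Matrix (Fin k) (Fin k) R) (h0 : ∀ i j, 0 ≤ A i j)
    (hforce : ∀ σ : Equiv.Perm (Fin k), (∀ j, A (σ j) j ≠ 0) → σ = 1) :
    0 ≤ A.det := by
  rw [Matrix.det_apply]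
  refine Finset.sum_nonneg fun σ _ => ?_
  by_cases h : ∀ j, A (σ j) j ≠ 0
  · rcases hforce σ h
    simpa using Finset.prod_nonneg fun j _ => h0 _ _
  · push_neg at h
    obtain ⟨j, hj⟩ := h
    rw [show (∏ i, A (σ i) i) = 0 from Finset.prod_eq_zero (Finset.mem_univ j) hj, smul_zero]

lemma det_diag_nonneg {C₀ : R} (hC : 0 ≤ C₀) {k : ℕ}
    {r c : Fin k → ℕ} (hr : StrictMono r) (hc : StrictMono c) :
    0 ≤ (Matrix.of fun i j : Fin k => if r i = c j then C₀ else 0).det := by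
  apply det_nonneg_of_forced_id
  · intro i j
    dsimp only [Matrix.of_apply]
    split <;> simp [hC]
  · intro σ hσ
    have hs : ∀ j, r (σ j) = c j := by
      intro j
      have := hσ j
      dsimp only [Matrix.of_apply] at this
      by_contra hne
      simp [hne] at this
    apply perm_eq_one_of_strictMono
    intro j1 j2 h12
    have : r (σ j1) < r (σ j2) := by rw [hs, hs]; exact hc h12
    exact hr.lt_iff_lt.1 this

lemma tp_delta (C₀ : R) (hC : 0 ≤ C₀) :
    ∀ (k : ℕ) (r c : Fin k → ℕ), StrictMono r → StrictMono c →
      0 ≤ minor (toeplitz fun n => if n = 0 then C₀ else 0) r c := by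
  intro k r c hr hc
  have e : (Matrix.of fun i j : Fin k =>
        toeplitz (fun n => if n = 0 then C₀ else 0) (r i) (c j))
      = Matrix.of fun i j : Fin k => if r i = c j then C₀ else 0 := by
    ext i j
    simp only [Matrix.of_apply, toeplitz]
    by_cases h : r i = c j
    · rw [if_pos h, if_pos (le_of_eq h.symm)]
      simp [h]
    · by_cases h2 : c j ≤ r i
      · rw [if_pos h2, if_neg h, if_neg (by omega)]
      · rw [if_neg h2, if_neg h]
  rw [minor, e]
  exact det_diag_nonneg hC hr hc

lemma tp_opA (α : R) (hα : 0 ≤ α) (a : ℕ → R)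
    (hTP : ∀ (k : ℕ) (r c : Fin k → ℕ), StrictMono r → StrictMono c →
      0 ≤ minor (toeplitz a) r c) :
    ∀ (k : ℕ) (r c : Fin k → ℕ), StrictMono r → StrictMono c →
      0 ≤ minor (toeplitz (opA α a)) r c := by
  intro k r c hr hc
  suffices H : ∀ t (d : Fin k → ℕ), StrictMono d →
      0 ≤ (Matrix.of fun i j : Fin k =>
        if (j : ℕ) < t then toeplitz (opA α a) (r i) (d j)
        else toeplitz a (r i) (d j)).det by
    have := H k c hc
    simpa [minor, Fin.is_lt] using this
  intro t
  induction t with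
  | zero =>
    intro d hd
    simpa [minor] using hTP k r d hr hd
  | succ t IH =>
    intro d hd
    by_cases ht : t < k
    · set T : Fin k := ⟨t, ht⟩ with hT
      have hTt : (T : ℕ) = t := rfl
      have hTnot : ¬ ((T : ℕ) < t) := by omega
      set M : Matrix (Fin k) (Fin k) R := Matrix.of fun i j : Fin k =>
        if (j : ℕ) < t then toeplitz (opA α a) (r i) (d j)
        else toeplitz a (r i) (d j) with hM
      have hMapp : ∀ i j, M i j =
          if (j : ℕ) < t then toeplitz (opA α a) (r i) (d j)
          else toeplitz a (r i) (d j) := fun i j => rfl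
      have key : (Matrix.of fun i j : Fin k =>
            if (j : ℕ) < t+1 then toeplitz (opA α a) (r i) (d j)
            else toeplitz a (r i) (d j))
          = M.updateCol T
              ((fun i => toeplitz a (r i) (d T)) + α • fun i => toeplitz a (r i) (d T + 1)) := by
        ext i j
        rw [Matrix.updateCol_apply]
        by_cases hj : j = T
        · subst hj
          rw [if_pos rfl, Matrix.of_apply, if_pos (show (T : ℕ) < t + 1 by omega),
            toeplitz_opA]
          simp
        · have hjv : (j : ℕ) ≠ t := fun h => hj (Fin.ext (h.trans hTt.symm))
          rw [if_neg hj, Matrix.of_apply, hMapp]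
          have : ((j : ℕ) < t + 1) ↔ ((j : ℕ) < t) := by omega
          simp only [this]
      rw [key, Matrix.det_updateCol_add, Matrix.det_updateCol_smul]
      have e1 : M.updateCol T (fun i => toeplitz a (r i) (d T)) = M := by
        ext i j
        rw [Matrix.updateCol_apply]
        by_cases hj : j = T
        · subst hj
          rw [if_pos rfl, hMapp, if_neg hTnot]
        · rw [if_neg hj]
      rw [e1]
      refine add_nonneg (IH d hd) (mul_nonneg hα ?_)
      by_cases hE : ∃ j : Fin k, T < j ∧ d j = d T + 1
      · obtain ⟨j, hTj, hdj⟩ := hE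
        refine le_of_eq (Matrix.det_zero_of_column_eq hTj.ne ?_).symm
        intro i
        have hjt : ¬ ((j : ℕ) < t) := by
          have h1 : (T : ℕ) < (j : ℕ) := hTj
          omega
        rw [Matrix.updateCol_apply, Matrix.updateCol_apply,
          if_pos rfl, if_neg hTj.ne', hMapp, if_neg hjt, hdj]
      · push_neg at hE
        set d' : Fin k → ℕ := Function.update d T (d T + 1) with hd'
        have hd'app : ∀ x, d' x = if x = T then d T + 1 else d x := fun x => by
          rw [hd', Function.update_apply]
        have hd'mono : StrictMono d' := by
          intro x y hxy
          rw [hd'app, hd'app]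
          split_ifs with hx hy hy
          · rw [hx, hy] at hxy; exact absurd hxy (lt_irrefl T)
          · have hTy : T < y := hx ▸ hxy
            have h1 := hd hTy
            have h2 := hE y hTy
            omega
          · have h1 := hd (show x < T from hy ▸ hxy)
            omega
          · exact hd hxy
        have e2 : M.updateCol T (fun i => toeplitz a (r i) (d T + 1))
            = Matrix.of fun i j : Fin k =>
              if (j : ℕ) < t then toeplitz (opA α a) (r i) (d' j)
              else toeplitz a (r i) (d' j) := by
          ext i j
          rw [Matrix.updateCol_apply, Matrix.of_apply]
          by_cases hj : j = T
          · subst hj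
            rw [if_pos rfl, if_neg hTnot, hd'app, if_pos rfl]
          · rw [if_neg hj, hMapp, hd'app, if_neg hj]
        rw [e2]
        exact IH d' hd'mono
    · have e3 : (Matrix.of fun i j : Fin k =>
            if (j : ℕ) < t+1 then toeplitz (opA α a) (r i) (d j)
            else toeplitz a (r i) (d j))
          = Matrix.of fun i j : Fin k =>
            if (j : ℕ) < t then toeplitz (opA α a) (r i) (d j)
            else toeplitz a (r i) (d j) := by
        ext i j
        have hjt : (j : ℕ) < t := lt_of_lt_of_le j.is_lt (le_of_not_gt ht)
        simp [hjt, Nat.lt_succ_of_lt hjt, Nat.lt_asymm hjt]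
      rw [e3]
      exact IH d hd

lemma tp_opB (β : R) (hβ : 0 ≤ β) (a : ℕ → R)
    (hTP : ∀ (k : ℕ) (r c : Fin k → ℕ), StrictMono r → StrictMono c →
      0 ≤ minor (toeplitz a) r c) :
    ∀ (k : ℕ) (r c : Fin k → ℕ), StrictMono r → StrictMono c →
      0 ≤ minor (toeplitz (opB β a)) r c := by
  intro k r c hr hc
  suffices H : ∀ t (d : Fin k → ℕ), StrictMono d →
      0 ≤ (Matrix.of fun i j : Fin k =>
        if (i : ℕ) < t then toeplitz (opB β a) (d i) (c j)
        else toeplitz a (d i) (c j)).det by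
    have := H k r hr
    simpa [minor, Fin.is_lt] using this
  intro t
  induction t with
  | zero =>
    intro d hd
    simpa [minor] using hTP k d c hd hc
  | succ t IH =>
    by_cases ht : t < k
    · set T : Fin k := ⟨t, ht⟩ with hT
      have hTt : (T : ℕ) = t := rfl
      have hTnot : ¬ ((T : ℕ) < t) := by omega
      suffices H2 : ∀ n (d : Fin k → ℕ), StrictMono d → d T ≤ n →
          0 ≤ (Matrix.of fun i j : Fin k =>
            if (i : ℕ) < t+1 then toeplitz (opB β a) (d i) (c j)
            else toeplitz a (d i) (c j)).det by
        intro d hd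
        exact H2 (d T) d hd le_rfl
      intro n
      induction n with
      | zero =>
        intro d hd hd0
        have hdT : d T = 0 := Nat.le_zero.mp hd0
        have ht0 : t = 0 := by
          by_contra h
          have hpos : (⟨0, by omega⟩ : Fin k) < T := by
            simp only [Fin.mk_lt_mk, hT]
            omega
          have := hd hpos
          omega
        subst ht0
        have e : (Matrix.of fun i j : Fin k =>
              if (i : ℕ) < 0+1 then toeplitz (opB β a) (d i) (c j)
              else toeplitz a (d i) (c j))
            = Matrix.of fun i j : Fin k =>
              if (i : ℕ) < 0 then toeplitz (opB β a) (d i) (c j)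
              else toeplitz a (d i) (c j) := by
          ext i j
          simp only [Matrix.of_apply]
          by_cases hi : (i : ℕ) < 0+1
          · have hiT : i = T := Fin.ext (by omega)
            rw [if_pos hi, if_neg (by omega : ¬ (i:ℕ) < 0), hiT, hdT,
              toeplitz_opB_zero]
          · rw [if_neg hi, if_neg (by omega : ¬ (i:ℕ) < 0)]
        rw [e]
        exact IH d hd
      | succ n IHn =>
        intro d hd hdn
        rcases Nat.lt_or_ge (d T) (n+1) with hlt | hge
        · exact IHn d hd (by omega)
        · have hdT : d T = n + 1 := le_antisymm hdn hge
          set M : Matrix (Fin k) (Fin k) R := Matrix.of fun i j : Fin k =>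
            if (i : ℕ) < t+1 then toeplitz (opB β a) (d i) (c j)
            else toeplitz a (d i) (c j) with hM
          have hMapp : ∀ i j, M i j =
              if (i : ℕ) < t+1 then toeplitz (opB β a) (d i) (c j)
              else toeplitz a (d i) (c j) := fun i j => rfl
          have key : M = M.updateRow T
              ((fun j => toeplitz a (d T) (c j)) + β • fun j => toeplitz (opB β a) n (c j)) := by
            ext i j
            rw [Matrix.updateRow_apply]
            by_cases hi : i = T
            · subst hi
              rw [if_pos rfl, hMapp, if_pos (show (T : ℕ) < t+1 by omega), hdT,
                toeplitz_opB_succ]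
              simp
            · rw [if_neg hi]
          rw [key, Matrix.det_updateRow_add, Matrix.det_updateRow_smul]
          have e1 : M.updateRow T (fun j => toeplitz a (d T) (c j))
              = Matrix.of fun i j : Fin k =>
                if (i : ℕ) < t then toeplitz (opB β a) (d i) (c j)
                else toeplitz a (d i) (c j) := by
            ext i j
            rw [Matrix.updateRow_apply, Matrix.of_apply]
            by_cases hi : i = T
            · subst hi
              rw [if_pos rfl, if_neg hTnot]
            · have hiv : (i : ℕ) ≠ t := fun h => hi (Fin.ext (h.trans hTt.symm))
              have hiff : ((i : ℕ) < t + 1) ↔ ((i : ℕ) < t) := by omega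
              rw [if_neg hi, hMapp]
              simp only [hiff]
          rw [e1]
          refine add_nonneg (IH d hd) (mul_nonneg hβ ?_)
          by_cases hE : ∃ i : Fin k, i < T ∧ d i = n
          · obtain ⟨i, hiT, hdi⟩ := hE
            refine le_of_eq (Matrix.det_zero_of_row_eq hiT.ne ?_).symm
            funext j
            have hit : (i : ℕ) < t := hiT
            rw [Matrix.updateRow_ne hiT.ne, Matrix.updateRow_self, hMapp,
              if_pos (by omega : (i : ℕ) < t + 1), hdi]
          · push_neg at hE
            set d' : Fin k → ℕ := Function.update d T n with hd'
            have hd'app : ∀ x, d' x = if x = T then n else d x := fun x => by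
              rw [hd', Function.update_apply]
            have hd'mono : StrictMono d' := by
              intro x y hxy
              rw [hd'app, hd'app]
              split_ifs with hx hy hy
              · rw [hx, hy] at hxy; exact absurd hxy (lt_irrefl T)
              · have hTy : T < y := hx ▸ hxy
                have h1 := hd hTy
                omega
              · have hxT : x < T := hy ▸ hxy
                have h1 := hd hxT
                have h2 := hE x hxT
                omega
              · exact hd hxy
            have e2 : M.updateRow T (fun j => toeplitz (opB β a) n (c j))
                = Matrix.of fun i j : Fin k =>
                  if (i : ℕ) < t+1 then toeplitz (opB β a) (d' i) (c j)
                  else toeplitz a (d' i) (c j) := by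
              ext i j
              rw [Matrix.updateRow_apply, Matrix.of_apply]
              by_cases hi : i = T
              · subst hi
                rw [if_pos rfl, if_pos (show (T : ℕ) < t+1 by omega), hd'app,
                  if_pos rfl]
              · rw [if_neg hi, hMapp, hd'app, if_neg hi]
            rw [e2]
            exact IHn d' hd'mono (le_of_eq (by rw [hd'app, if_pos rfl]))
    · intro d hd
      have e3 : (Matrix.of fun i j : Fin k =>
            if (i : ℕ) < t+1 then toeplitz (opB β a) (d i) (c j)
            else toeplitz a (d i) (c j))
          = Matrix.of fun i j : Fin k =>
            if (i : ℕ) < t then toeplitz (opB β a) (d i) (c j)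
            else toeplitz a (d i) (c j) := by
        ext i j
        have hit : (i : ℕ) < t := lt_of_lt_of_le i.is_lt (le_of_not_gt ht)
        simp [hit, Nat.lt_succ_of_lt hit, Nat.lt_asymm hit]
      rw [e3]
      exact IH d hd

end TP

section Main

variable {R : Type*} [CommRing R] [PartialOrder R] [IsOrderedRing R]

/-- Iterated application of `opA`, starting from the constant series `C₀`. -/
def seqA (α : ℕ → R) (C₀ : R) : ℕ → (ℕ → R)
  | 0 => fun n => if n = 0 then C₀ else 0
  | m+1 => opA (α m) (seqA α C₀ m)

/-- Iterated application of `opB`, starting from a sequence `s`. -/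
def seqB (β : ℕ → R) (s : ℕ → R) : ℕ → (ℕ → R)
  | 0 => s
  | m+1 => opB (β m) (seqB β s m)

open PowerSeries in
lemma mk_seqA (α : ℕ → R) (C₀ : R) (m : ℕ) :
    PowerSeries.mk (seqA α C₀ m)
      = PowerSeries.C C₀
        * ∏ i ∈ Finset.range m, (1 + PowerSeries.C (α i) * PowerSeries.X) := by
  induction m with
  | zero =>
    simp only [seqA, Finset.range_zero, Finset.prod_empty, mul_one]
    ext n
    cases n <;> simp [PowerSeries.coeff_mk, PowerSeries.coeff_C]
  | succ m IH =>
    show PowerSeries.mk (opA (α m) (seqA α C₀ m)) = _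
    rw [mk_opA, IH, Finset.prod_range_succ]
    ring

open PowerSeries in
lemma mk_seqB (β : ℕ → R) (s : ℕ → R) (m : ℕ) :
    (∏ i ∈ Finset.range m, (1 - PowerSeries.C (β i) * PowerSeries.X))
      * PowerSeries.mk (seqB β s m) = PowerSeries.mk s := by
  induction m with
  | zero => simp [seqB]
  | succ m IH =>
    show _ * PowerSeries.mk (opB (β m) (seqB β s m)) = _
    rw [Finset.prod_range_succ, mul_assoc, mk_opB, IH]

lemma tp_seqA (α : ℕ → R) (C₀ : R) (hα : ∀ i, 0 ≤ α i) (hC : 0 ≤ C₀) (m : ℕ) :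
    ∀ (k : ℕ) (r c : Fin k → ℕ), StrictMono r → StrictMono c →
      0 ≤ minor (toeplitz (seqA α C₀ m)) r c := by
  induction m with
  | zero => exact tp_delta C₀ hC
  | succ m IH => exact tp_opA (α m) (hα m) _ IH

lemma tp_seqB (β : ℕ → R) (s : ℕ → R) (hβ : ∀ i, 0 ≤ β i)
    (hs : ∀ (k : ℕ) (r c : Fin k → ℕ), StrictMono r → StrictMono c →
      0 ≤ minor (toeplitz s) r c) (m : ℕ) :
    ∀ (k : ℕ) (r c : Fin k → ℕ), StrictMono r → StrictMono c →
      0 ≤ minor (toeplitz (seqB β s m)) r c := by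
  induction m with
  | zero => exact hs
  | succ m IH => exact tp_opB (β m) (hβ m) _ IH

end Main

open PowerSeries in
/-- Sufficient condition for Toeplitz-total positivity: if the generating
function of a sequence `a` in a partially ordered commutative ring `R` is
`C₀ ∏_{i=1}^N (1 + αᵢ t)/(1 - βᵢ t)` with `αᵢ, βᵢ, C₀` nonnegative, then the
Toeplitz matrix of `a` is totally positive (all its minors are nonnegative).
The generating-function identity is stated multiplied through by the
denominators `1 - βᵢ t` in `R[[t]]`. -/
theorem toeplitz_TP_of_rational_gf {R : Type*} [CommRing R] [PartialOrder R] [IsOrderedRing R] (N : ℕ)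
    (α β : ℕ → R) (C₀ : R) (hα : ∀ i, 0 ≤ α i) (hβ : ∀ i, 0 ≤ β i)
    (hC : 0 ≤ C₀) (a : ℕ → R)
    (ha : (∏ i ∈ Finset.range N, (1 - PowerSeries.C (β i) * PowerSeries.X))
            * PowerSeries.mk a
          = PowerSeries.C C₀
            * ∏ i ∈ Finset.range N, (1 + PowerSeries.C (α i) * PowerSeries.X)) :
    ∀ (k : ℕ) (r c : Fin k → ℕ), StrictMono r → StrictMono c →
      0 ≤ minor (toeplitz a) r c := by
  have h1 : (∏ i ∈ Finset.range N, (1 - PowerSeries.C (β i) * PowerSeries.X))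
      * PowerSeries.mk (seqB β (seqA α C₀ N) N)
      = PowerSeries.C C₀
        * ∏ i ∈ Finset.range N, (1 + PowerSeries.C (α i) * PowerSeries.X) := by
    rw [mk_seqB, mk_seqA]
  have hu : IsUnit (∏ i ∈ Finset.range N,
      (1 - PowerSeries.C (β i) * PowerSeries.X)) :=
    Finset.prod_induction _ IsUnit (fun _ _ h1 h2 => h1.mul h2) isUnit_one
      (fun i _ => isUnit_one_sub (β i))
  have hmk : PowerSeries.mk a = PowerSeries.mk (seqB β (seqA α C₀ N) N) :=
    hu.mul_left_cancel (ha.trans h1.symm)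
  have haeq : a = seqB β (seqA α C₀ N) N := by
    funext n
    have h2 := congrArg (PowerSeries.coeff n) hmk
    simpa using h2
  rw [haeq]
  exact tp_seqB β (seqA α C₀ N) hβ (tp_seqA α C₀ hα hC N) N
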